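/- Let m, k, l be natural numbers with k + l < m − 1, and let C_{j,h}(m,k,l) be the coefficients of the dual constrained Bernstein basis in the Bernstein basis, D_j^{(m,k,l)} = Σ_{h=k+1}^{m−l−1} C_{j,h} Bᵐ_h. Then for every h with k+1 ≤ h ≤ m−l−2, C_{k+1,h} = [ (h−m)(h−k)(h+k+3) / ((h+1)((h−m)² − (l+1)²)) ] · C_{k+1,h+1}. -/

import Mathlib

open Finset intervalIntegral Polynomial


lemma beta_nat : ∀ (b a : ℕ), (∫ x in (0:ℝ)..1, x ^ a * (1 - x) ^ b)
    = (a.factorial * b.factorial : ℝ) / (a + b + 1).factorial := by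
  intro b
  induction b with
  | zero =>
    intro a
    have ha : ((a:ℝ)+1) ≠ 0 := by positivity
    have hfa : (a.factorial : ℝ) ≠ 0 := by exact_mod_cast a.factorial_ne_zero
    simp only [pow_zero, mul_one, integral_pow, Nat.factorial_zero, Nat.add_zero,
      Nat.factorial_succ]
    push_cast
    field_simp
    simp
  | succ b ih =>
    intro a
    have ha : ((a:ℝ)+1) ≠ 0 := by positivity
    have key : (∫ x in (0:ℝ)..1, x ^ a * (1 - x) ^ (b+1))
        = ((b:ℝ)+1)/((a:ℝ)+1) * ∫ x in (0:ℝ)..1, x ^ (a+1) * (1 - x) ^ b := by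
      have hu : ∀ x ∈ Set.uIcc (0:ℝ) 1, HasDerivAt (fun x : ℝ => x^(a+1)/((a:ℝ)+1)) (x^a) x := by
        intro x _
        have h0 : HasDerivAt (fun x : ℝ => x^(a+1)) (((a:ℝ)+1) * x^a) x := by
          simpa using (hasDerivAt_pow (a+1) x)
        have := h0.div_const ((a:ℝ)+1)
        simpa [mul_div_assoc, mul_div_cancel_left₀ _ ha] using this
      have hv : ∀ x ∈ Set.uIcc (0:ℝ) 1, HasDerivAt (fun x : ℝ => (1-x)^(b+1))
          (-((b:ℝ)+1) * (1-x)^b) x := by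
        intro x _
        have h1 : HasDerivAt (fun x : ℝ => 1 - x) (-1) x := by
          simpa using (hasDerivAt_id x).const_sub 1
        have h2 := (hasDerivAt_pow (b+1) (1-x)).comp x h1
        have h3 : ((b+1:ℕ):ℝ) * (1-x)^(b+1-1) * (-1) = -((b:ℝ)+1)*(1-x)^b := by
          push_cast; ring
        exact h3 ▸ h2
      have hiu : IntervalIntegrable (fun x : ℝ => x^a) MeasureTheory.volume 0 1 :=
        (continuous_pow a).intervalIntegrable _ _
      have hiv : IntervalIntegrable (fun x : ℝ => -((b:ℝ)+1) * (1-x)^b) MeasureTheory.volume 0 1 :=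
        (Continuous.mul continuous_const (((continuous_const.sub continuous_id).pow b))).intervalIntegrable _ _
      have H := integral_mul_deriv_eq_deriv_mul hu hv hiu hiv
      have e1 : ∀ x:ℝ, (x^(a+1)/((a:ℝ)+1)) * (-((b:ℝ)+1) * (1-x)^b)
          = (-(((b:ℝ)+1)/((a:ℝ)+1))) * (x^(a+1)*(1-x)^b) := fun x => by ring
      simp only [e1] at H
      rw [intervalIntegral.integral_const_mul] at H
      simp only [one_pow, zero_pow, sub_zero, sub_self] at H
      norm_num at H
      linarith [H]
    rw [key, ih (a+1)]
    have hf : ((a+1+b+1).factorial : ℝ) ≠ 0 := by exact_mod_cast (a+1+b+1).factorial_ne_zero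
    have : a + (b+1) + 1 = a+1+b+1 := by omega
    rw [this]
    rw [Nat.factorial_succ (a), Nat.factorial_succ (b)]
    push_cast
    field_simp


lemma findiff : ∀ (n : ℕ) (p : Polynomial ℝ), p.degree < n →
    ∑ i ∈ range (n+1), (-1:ℝ)^i * (n.choose i) * p.eval (i:ℝ) = 0 := by
  intro n
  induction n with
  | zero =>
    intro p hp
    have : p = 0 := by
      by_contra h
      have := Polynomial.zero_le_degree_iff.mpr h
      exact absurd (lt_of_le_of_lt this hp) (by simp)
    simp [this]
  | succ n ih =>
    intro p hp
    rcases eq_or_ne p 0 with h0 | h0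
    · simp [h0]
    set c : Polynomial ℝ := p.comp (X + 1) with hc
    set q : Polynomial ℝ := p - c with hqdef
    have hx1 : (X + (1:Polynomial ℝ)) = X + C 1 := by rw [Polynomial.C_1]
    have hndx : (X + (1:Polynomial ℝ)).natDegree = 1 := by
      rw [hx1]; exact Polynomial.natDegree_X_add_C 1
    have hlc : c.leadingCoeff = p.leadingCoeff := by
      rw [hc, Polynomial.leadingCoeff_comp (by rw [hndx]; norm_num)]
      rw [hx1, Polynomial.leadingCoeff_X_add_C]
      simp
    have hc0 : c ≠ 0 := by
      intro hz
      apply h0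
      have := hlc
      rw [hz] at this
      simp at this
      exact Polynomial.leadingCoeff_eq_zero.mp this.symm
    have hdc : c.degree = p.degree := by
      rw [Polynomial.degree_eq_natDegree hc0, Polynomial.degree_eq_natDegree h0]
      rw [hc, Polynomial.natDegree_comp, hndx, mul_one]
    have hdn : p.natDegree ≤ n := by
      have := (Polynomial.natDegree_lt_iff_degree_lt h0).mpr hp
      omega
    have hq : q.degree < n := by
      have h1 : q.degree < p.degree := Polynomial.degree_sub_lt hdc.symm h0 hlc.symm
      calc q.degree < p.degree := h1
        _ ≤ (n : WithBot ℕ) := by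
            rw [Polynomial.degree_eq_natDegree h0]
            exact_mod_cast hdn
    have heval : ∀ i : ℕ, q.eval (i:ℝ) = p.eval (i:ℝ) - p.eval ((i:ℝ)+1) := by
      intro i
      simp [hqdef, hc, Polynomial.eval_comp]
    have key := ih q hq
    have hAB : ∑ i ∈ range (n+1), (-1:ℝ)^i * (n.choose i) * p.eval (i:ℝ)
        = ∑ i ∈ range (n+1), (-1:ℝ)^i * (n.choose i) * p.eval ((i:ℝ)+1) := by
      have : ∑ i ∈ range (n+1), ((-1:ℝ)^i * (n.choose i) * p.eval (i:ℝ)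
          - (-1:ℝ)^i * (n.choose i) * p.eval ((i:ℝ)+1)) = 0 := by
        rw [← key]
        apply Finset.sum_congr rfl
        intro i _
        rw [heval i]; ring
      rw [Finset.sum_sub_distrib] at this
      linarith
    -- goal manipulation
    rw [Finset.sum_range_succ']
    have e1 : ∀ i, (-1:ℝ)^(i+1) * (((n+1).choose (i+1) : ℕ) : ℝ) * p.eval ((i+1:ℕ):ℝ)
        = -((-1:ℝ)^i * (n.choose i) * p.eval ((i:ℝ)+1))
          - ((-1:ℝ)^i * (n.choose (i+1)) * p.eval ((i:ℝ)+1)) := by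
      intro i
      rw [Nat.choose_succ_succ]
      push_cast
      ring
    rw [Finset.sum_congr rfl (fun i _ => e1 i)]
    rw [Finset.sum_sub_distrib, Finset.sum_neg_distrib]
    -- remaining: -B - C + p 0 = 0 where C = p 0 - A
    have hC : ∑ i ∈ range (n+1), (-1:ℝ)^i * (n.choose (i+1)) * p.eval ((i:ℝ)+1)
        = p.eval 0 - ∑ i ∈ range (n+1), (-1:ℝ)^i * (n.choose i) * p.eval (i:ℝ) := by
      have h2 : ∑ i ∈ range (n+2), (-1:ℝ)^i * (n.choose i) * p.eval (i:ℝ)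
          = (∑ i ∈ range (n+1), (-1:ℝ)^(i+1) * (n.choose (i+1)) * p.eval ((i+1:ℕ):ℝ))
            + (-1:ℝ)^0 * (n.choose 0) * p.eval ((0:ℕ):ℝ) := Finset.sum_range_succ' _ _
      have h3 : ∑ i ∈ range (n+2), (-1:ℝ)^i * (n.choose i) * p.eval (i:ℝ)
          = ∑ i ∈ range (n+1), (-1:ℝ)^i * (n.choose i) * p.eval (i:ℝ) := by
        rw [Finset.sum_range_succ, Nat.choose_succ_self]
        simp
      rw [h3] at h2
      have h4 : ∑ i ∈ range (n+1), (-1:ℝ)^(i+1) * (n.choose (i+1)) * p.eval ((i+1:ℕ):ℝ)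
          = - ∑ i ∈ range (n+1), (-1:ℝ)^i * (n.choose (i+1)) * p.eval ((i:ℝ)+1) := by
        rw [← Finset.sum_neg_distrib]
        apply Finset.sum_congr rfl
        intro i _
        push_cast
        ring
      rw [h4] at h2
      simp at h2
      linarith
    rw [hC, ← hAB]
    simp
    linarith [hAB]

lemma ortho (k l n r s : ℕ) (hn : r + s + 1 = n) :
    ∑ i ∈ range (n+1), ((-1:ℝ)^i * (n.choose i) * ((n+2*k+3).descFactorial (n-i)) *
      ((n+2*l+2).descFactorial i)) * ((2*k+3+i+r).factorial) *
      ((2*n+2*l+1-i-r).factorial) = 0 := by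
  set p : Polynomial ℝ :=
    (∏ t ∈ range r, (X + C ((2*k+3+r-t : ℕ) : ℝ))) *
      (∏ t ∈ range s, (C ((2*n+2*l+1-r-t : ℕ) : ℝ) - X)) with hp
  have hdeg : p.degree < n := by
    have h1 : p.natDegree < n := by
      have d1 : (∏ t ∈ range r, (X + C ((2*k+3+r-t : ℕ) : ℝ))).natDegree ≤ r := by
        refine le_trans (Polynomial.natDegree_prod_le _ _) ?_
        rw [Finset.sum_congr rfl (fun t _ => Polynomial.natDegree_X_add_C ((2*k+3+r-t : ℕ) : ℝ))]
        simp
      have d2 : (∏ t ∈ range s, (C ((2*n+2*l+1-r-t : ℕ) : ℝ) - X)).natDegree ≤ s := by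
        refine le_trans (Polynomial.natDegree_prod_le _ _) ?_
        have hone : ∀ t ∈ range s, (C ((2*n+2*l+1-r-t : ℕ) : ℝ) - X).natDegree = 1 := by
          intro t _
          have heq : (C ((2*n+2*l+1-r-t : ℕ) : ℝ) - X) = -(X - C ((2*n+2*l+1-r-t : ℕ) : ℝ)) := by
            ring
          rw [heq, Polynomial.natDegree_neg, Polynomial.natDegree_X_sub_C]
        rw [Finset.sum_congr rfl hone]
        simp
      calc p.natDegree ≤ _ + _ := Polynomial.natDegree_mul_le
        _ < n := by omega
    exact lt_of_le_of_lt (Polynomial.degree_le_natDegree) (by exact_mod_cast h1)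
  have hpe : ∀ i : ℕ, i ≤ n → p.eval (i:ℝ)
      = (((2*k+3+i+r).descFactorial r * ((2*n+2*l+1-i-r).descFactorial s) : ℕ) : ℝ) := by
    intro i hi
    rw [hp, Polynomial.eval_mul, Polynomial.eval_prod, Polynomial.eval_prod, Nat.cast_mul,
      Nat.descFactorial_eq_prod_range, Nat.descFactorial_eq_prod_range, Nat.cast_prod,
      Nat.cast_prod]
    congr 1
    · apply Finset.prod_congr rfl
      intro t ht
      have ht' : t < r := Finset.mem_range.mp ht
      simp only [Polynomial.eval_add, Polynomial.eval_X, Polynomial.eval_C]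
      rw [show 2*k+3+i+r-t = (2*k+3+r-t) + i from by omega, Nat.cast_add]
      ring
    · apply Finset.prod_congr rfl
      intro t ht
      have ht' : t < s := Finset.mem_range.mp ht
      simp only [Polynomial.eval_sub, Polynomial.eval_X, Polynomial.eval_C]
      rw [← Nat.cast_sub (show i ≤ 2*n+2*l+1-r-t by omega)]
      congr 1
      omega
  have key := findiff n p hdeg
  have hterm : ∀ i ∈ range (n+1),
      ((-1:ℝ)^i * (n.choose i) * ((n+2*k+3).descFactorial (n-i)) *
        ((n+2*l+2).descFactorial i)) * ((2*k+3+i+r).factorial) *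
        ((2*n+2*l+1-i-r).factorial)
      = (((n+2*k+3).factorial * (n+2*l+2).factorial : ℕ) : ℝ) *
          ((-1:ℝ)^i * (n.choose i) * p.eval (i:ℝ)) := by
    intro i hi
    simp only [Finset.mem_range] at hi
    have hi' : i ≤ n := by omega
    rw [hpe i hi']
    have e1 : (2*k+3+i).factorial * (n+2*k+3).descFactorial (n-i) = (n+2*k+3).factorial := by
      have := Nat.factorial_mul_descFactorial (show n-i ≤ n+2*k+3 by omega)
      rwa [show n+2*k+3-(n-i) = 2*k+3+i by omega] at this
    have e2 : (2*k+3+i+r).factorial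
        = (2*k+3+i).factorial * (2*k+3+i+r).descFactorial r := by
      have := Nat.factorial_mul_descFactorial (show r ≤ 2*k+3+i+r by omega)
      rw [show 2*k+3+i+r-r = 2*k+3+i by omega] at this
      omega
    have e3 : (n+2*l+2-i).factorial * (n+2*l+2).descFactorial i = (n+2*l+2).factorial := by
      have := Nat.factorial_mul_descFactorial (show i ≤ n+2*l+2 by omega)
      rwa [show n+2*l+2-i = n+2*l+2-i by rfl] at this
    have e4 : (2*n+2*l+1-i-r).factorial
        = (n+2*l+2-i).factorial * (2*n+2*l+1-i-r).descFactorial s := by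
      have := Nat.factorial_mul_descFactorial (show s ≤ 2*n+2*l+1-i-r by omega)
      rw [show 2*n+2*l+1-i-r-s = n+2*l+2-i by omega] at this
      omega
    -- now a pure multiplicative identity over ℕ casts
    have ee : ((n+2*k+3).descFactorial (n-i)) * ((n+2*l+2).descFactorial i) *
        ((2*k+3+i+r).factorial) * ((2*n+2*l+1-i-r).factorial)
        = ((n+2*k+3).factorial * (n+2*l+2).factorial) *
          ((2*k+3+i+r).descFactorial r * ((2*n+2*l+1-i-r).descFactorial s)) := by
      rw [e2, e4, ← e1, ← e3]
      ring
    have ee' : (((n+2*k+3).descFactorial (n-i) * ((n+2*l+2).descFactorial i) *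
          ((2*k+3+i+r).factorial) * ((2*n+2*l+1-i-r).factorial) : ℕ) : ℝ)
        = (((n+2*k+3).factorial * (n+2*l+2).factorial *
            ((2*k+3+i+r).descFactorial r * ((2*n+2*l+1-i-r).descFactorial s)) : ℕ) : ℝ) := by
      exact_mod_cast congrArg (fun x : ℕ => (x : ℝ)) ee
    push_cast at ee' ⊢
    linear_combination ((-1:ℝ)^i * (n.choose i)) * ee'
  rw [Finset.sum_congr rfl hterm, ← Finset.mul_sum, key, mul_zero]


lemma bern_integral_pow (m ν a b : ℕ) :
    ∫ u in (0:ℝ)..1, (bernsteinPolynomial ℝ m ν).eval u * (u^a * (1-u)^b)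
      = (m.choose ν : ℝ) * (((ν+a).factorial * ((m-ν)+b).factorial : ℝ)
          / ((ν+a)+((m-ν)+b)+1).factorial) := by
  have hpt : ∀ u : ℝ, (bernsteinPolynomial ℝ m ν).eval u * (u^a * (1-u)^b)
      = (m.choose ν : ℝ) * (u^(ν+a) * (1-u)^((m-ν)+b)) := by
    intro u
    simp [bernsteinPolynomial, pow_add]
    ring
  simp only [hpt]
  rw [intervalIntegral.integral_const_mul, beta_nat]


lemma ratio_lemma (k l n i : ℕ) (hi : i + 1 ≤ n) :
    ((-1:ℝ)^i * ((n.choose i : ℕ) : ℝ) * (((n+2*k+3).descFactorial (n-i) : ℕ) : ℝ) *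
        (((n+2*l+2).descFactorial i : ℕ) : ℝ))
      * (((n+k+l+2).choose (k+1+i+1) : ℕ) : ℝ)
    = ((((k+1+i:ℕ):ℝ)-((n+k+l+2:ℕ):ℝ))*(((k+1+i:ℕ):ℝ)-(k:ℝ))*(((k+1+i:ℕ):ℝ)+(k:ℝ)+3)) /
        ((((k+1+i:ℕ):ℝ)+1)*((((k+1+i:ℕ):ℝ)-((n+k+l+2:ℕ):ℝ))^2-((l:ℝ)+1)^2))
      * ((-1:ℝ)^(i+1) * ((n.choose (i+1) : ℕ) : ℝ) *
          (((n+2*k+3).descFactorial (n-(i+1)) : ℕ) : ℝ) *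
          (((n+2*l+2).descFactorial (i+1) : ℕ) : ℝ))
      * (((n+k+l+2).choose (k+1+i) : ℕ) : ℝ) := by
  have hE1 : ((n.choose (i+1) : ℕ) : ℝ) * ((i:ℝ)+1)
      = ((n.choose i : ℕ) : ℝ) * ((n:ℝ)-(i:ℝ)) := by
    have h0 := Nat.choose_succ_right_eq n i
    have h2 : ((n.choose (i+1) * (i+1) : ℕ) : ℝ) = ((n.choose i * (n-i) : ℕ) : ℝ) := by
      exact_mod_cast h0
    push_cast [Nat.cast_sub (show i ≤ n by omega)] at h2
    linarith
  have hE2 : (((n+k+l+2).choose (k+1+i+1) : ℕ) : ℝ) * (((k:ℝ)+1+(i:ℝ))+1)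
      = (((n+k+l+2).choose (k+1+i) : ℕ) : ℝ) * (((n:ℝ)+(l:ℝ)+1)-(i:ℝ)) := by
    have h0 := Nat.choose_succ_right_eq (n+k+l+2) (k+1+i)
    have h2 : (((n+k+l+2).choose (k+1+i+1) * (k+1+i+1) : ℕ) : ℝ)
        = (((n+k+l+2).choose (k+1+i) * ((n+k+l+2)-(k+1+i)) : ℕ) : ℝ) := by exact_mod_cast h0
    push_cast [Nat.cast_sub (show k+1+i ≤ n+k+l+2 by omega)] at h2
    push_cast
    linarith
  have hF1 : (((n+2*k+3).descFactorial (n-i) : ℕ) : ℝ)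
      = ((2*k+4+i : ℕ) : ℝ) * (((n+2*k+3).descFactorial (n-(i+1)) : ℕ) : ℝ) := by
    have h0 : (n+2*k+3).descFactorial ((n-(i+1))+1)
        = ((n+2*k+3) - (n-(i+1))) * (n+2*k+3).descFactorial (n-(i+1)) :=
      Nat.descFactorial_succ _ _
    rw [show (n-(i+1))+1 = n-i from by omega, show (n+2*k+3) - (n-(i+1)) = 2*k+4+i from by omega]
      at h0
    exact_mod_cast h0
  have hF2 : (((n+2*l+2).descFactorial (i+1) : ℕ) : ℝ)
      = (((n:ℝ)+2*(l:ℝ)+2)-(i:ℝ)) * (((n+2*l+2).descFactorial i : ℕ) : ℝ) := by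
    have h0 : (n+2*l+2).descFactorial (i+1)
        = ((n+2*l+2) - i) * (n+2*l+2).descFactorial i := Nat.descFactorial_succ _ _
    have h2 : (((n+2*l+2).descFactorial (i+1) : ℕ) : ℝ)
        = (((n+2*l+2) - i : ℕ) : ℝ) * (((n+2*l+2).descFactorial i : ℕ) : ℝ) := by
      exact_mod_cast h0
    rw [Nat.cast_sub (show i ≤ n+2*l+2 by omega)] at h2
    push_cast at h2 ⊢
    linarith
  have hd1 : (((k+1+i:ℕ):ℝ)+1) ≠ 0 := by push_cast; positivity
  have hd2 : ((((k+1+i:ℕ):ℝ)-((n+k+l+2:ℕ):ℝ))^2-((l:ℝ)+1)^2) ≠ 0 := by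
    push_cast
    have e : (((k:ℝ)+1+(i:ℝ))-((n:ℝ)+(k:ℝ)+(l:ℝ)+2))^2-((l:ℝ)+1)^2
        = (((n:ℝ)-(i:ℝ))) * (((n:ℝ)+2*(l:ℝ)+2)-(i:ℝ)) := by ring
    rw [e]
    have g1 : (0:ℝ) < (n:ℝ)-(i:ℝ) := by
      have : (i:ℝ) + 1 ≤ (n:ℝ) := by exact_mod_cast hi
      linarith
    have g2 : (0:ℝ) < ((n:ℝ)+2*(l:ℝ)+2)-(i:ℝ) := by
      have : (i:ℝ) + 1 ≤ (n:ℝ) := by exact_mod_cast hi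
      have hl : (0:ℝ) ≤ (l:ℝ) := Nat.cast_nonneg l
      linarith
    positivity
  rw [hF1, hF2]
  rw [div_mul_eq_mul_div, div_mul_eq_mul_div, eq_div_iff (by exact mul_ne_zero hd1 hd2)]
  push_cast at hE1 hE2 ⊢
  linear_combination ((-1:ℝ)^i * (((n+2*k+3).descFactorial (n-(i+1)) : ℕ) : ℝ)
      * (((n+2*l+2).descFactorial i : ℕ) : ℝ) * (2*(k:ℝ)+4+(i:ℝ)) * ((n:ℝ)+2*(l:ℝ)+2-(i:ℝ)))
    * ((((n.choose i : ℕ) : ℝ)*((n:ℝ)-(i:ℝ))) * hE2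
       - ((((n+k+l+2).choose (k+1+i) : ℕ) : ℝ) * ((n:ℝ)+(l:ℝ)+1-(i:ℝ))) * hE1)

lemma aux_div (A B RR F chh chh1 chk g : ℝ) (h1 : chh ≠ 0) (h2 : chh1 ≠ 0)
    (hr : A * chh1 = RR * B * chh) :
    A * chh⁻¹ * F / (chk * g) = RR * (B * chh1⁻¹ * F / (chk * g)) := by
  have hA : A = RR * B * chh / chh1 := by rw [eq_div_iff h2]; exact hr
  rw [hA]
  field_simp

theorem dual_basis_coeff_first_row_recurrence (m k l : ℕ) (hklm : k + l + 1 < m)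
    (D : ℕ → Polynomial ℝ) (C : ℕ → ℕ → ℝ)
    (hmem : ∀ j ∈ Finset.Icc (k + 1) (m - l - 1),
      D j ∈ Submodule.span ℝ
        ((fun i => bernsteinPolynomial ℝ m i) '' Set.Icc (k + 1) (m - l - 1)))
    (hdual : ∀ j ∈ Finset.Icc (k + 1) (m - l - 1), ∀ h ∈ Finset.Icc (k + 1) (m - l - 1),
      (∫ u in (0:ℝ)..1, (D j).eval u * (bernsteinPolynomial ℝ m h).eval u)
        = if j = h then 1 else 0)
    (hC : ∀ j ∈ Finset.Icc (k + 1) (m - l - 1),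
      D j = ∑ h ∈ Finset.Icc (k + 1) (m - l - 1), C j h • bernsteinPolynomial ℝ m h) :
    ∀ h : ℕ, k + 1 ≤ h → h ≤ m - l - 2 →
      C (k + 1) h
        = (((h : ℝ) - m) * ((h : ℝ) - k) * ((h : ℝ) + k + 3)) /
            (((h : ℝ) + 1) * (((h : ℝ) - m) ^ 2 - ((l : ℝ) + 1) ^ 2)) *
          C (k + 1) (h + 1) := by
  intro h hk hh
  have hm : k + l + 3 ≤ m := by omega
  set n : ℕ := m - k - l - 2 with hn
  have hn1 : 1 ≤ n := by omega
  set i0 : ℕ := h - k - 1 with hi0def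
  have hi0n : i0 + 1 ≤ n := by omega
  have hh' : h = k + 1 + i0 := by omega
  set a : ℕ → ℝ := fun i => (-1:ℝ)^i * (n.choose i) * ((n+2*k+3).descFactorial (n-i)) *
    ((n+2*l+2).descFactorial i) with ha
  set g : ℕ → ℕ → ℝ := fun h' i => (((h' + (k+1+i)).factorial : ℕ) : ℝ) *
    ((((m-h') + (m-(k+1+i))).factorial : ℕ) : ℝ) with hg
  have hk1Icc : k + 1 ∈ Finset.Icc (k+1) (m-l-1) := by
    rw [Finset.mem_Icc]; omega
  -- Step A : pairing D j against monomial-form Bernstein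
  have keyA : ∀ j ∈ Finset.Icc (k+1) (m-l-1), ∀ i : ℕ, i ≤ n →
      (∫ u in (0:ℝ)..1, (D j).eval u * (u^(k+1+i) * (1-u)^(m-(k+1+i))))
        = (if j = k+1+i then ((m.choose (k+1+i) : ℝ))⁻¹ else 0) := by
    intro j hj i hi
    have hmem2 : k+1+i ∈ Finset.Icc (k+1) (m-l-1) := by rw [Finset.mem_Icc]; omega
    have hch : ((m.choose (k+1+i)):ℝ) ≠ 0 :=
      Nat.cast_ne_zero.mpr (Nat.choose_pos (show k+1+i ≤ m by omega)).ne'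
    have hpt : ∀ u : ℝ, (D j).eval u * (u^(k+1+i) * (1-u)^(m-(k+1+i)))
        = ((m.choose (k+1+i)):ℝ)⁻¹ * ((D j).eval u * (bernsteinPolynomial ℝ m (k+1+i)).eval u) := by
      intro u
      simp only [bernsteinPolynomial, Polynomial.eval_mul, Polynomial.eval_pow,
        Polynomial.eval_natCast, Polynomial.eval_X, Polynomial.eval_sub, Polynomial.eval_one]
      field_simp
    simp only [hpt]
    rw [intervalIntegral.integral_const_mul, hdual j hj _ hmem2]
    by_cases hji : j = k+1+i <;> simp [hji]
  -- Step B : expanding D j in the Bernstein basis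
  have keyB : ∀ j ∈ Finset.Icc (k+1) (m-l-1), ∀ i : ℕ, i ≤ n →
      (∫ u in (0:ℝ)..1, (D j).eval u * (u^(k+1+i) * (1-u)^(m-(k+1+i))))
        = ∑ h' ∈ Finset.Icc (k+1) (m-l-1),
            C j h' * ((m.choose h' : ℝ) * (g h' i / ((2*m+1).factorial : ℝ))) := by
    intro j hj i hi
    conv_lhs => rw [hC j hj]
    simp only [Polynomial.eval_finset_sum, Polynomial.eval_smul, smul_eq_mul, Finset.sum_mul]
    have hintB : ∀ h' ∈ Finset.Icc (k+1) (m-l-1), IntervalIntegrable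
        (fun u : ℝ => C j h' * (bernsteinPolynomial ℝ m h').eval u *
          (u ^ (k+1+i) * (1-u) ^ (m-(k+1+i)))) MeasureTheory.volume 0 1 := by
      intro h' _
      exact Continuous.intervalIntegrable
        (((continuous_const.mul (bernsteinPolynomial ℝ m h').continuous)).mul
          (((continuous_pow _).mul ((continuous_const.sub continuous_id).pow _)))) _ _
    rw [intervalIntegral.integral_finset_sum hintB]
    apply Finset.sum_congr rfl
    intro h' hh'
    rw [Finset.mem_Icc] at hh'
    have hpt : ∀ u : ℝ, C j h' * (bernsteinPolynomial ℝ m h').eval u *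
        (u^(k+1+i) * (1-u)^(m-(k+1+i)))
        = C j h' * ((bernsteinPolynomial ℝ m h').eval u * (u^(k+1+i) * (1-u)^(m-(k+1+i)))) := by
      intro u; ring
    simp only [hpt]
    rw [intervalIntegral.integral_const_mul, bern_integral_pow]
    rw [show (h'+(k+1+i))+((m-h')+(m-(k+1+i)))+1 = 2*m+1 from by omega]
  -- the combined key identity
  have key : ∀ j ∈ Finset.Icc (k+1) (m-l-1),
      a (j-k-1) * ((m.choose j : ℝ))⁻¹
        = (C j (k+1) * (m.choose (k+1) : ℝ) / ((2*m+1).factorial : ℝ))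
            * (∑ i ∈ range (n+1), a i * g (k+1) i) := by
    intro j hj
    have hjIcc := Finset.mem_Icc.mp hj
    have hS1 : (∑ i ∈ range (n+1), a i *
        (∫ u in (0:ℝ)..1, (D j).eval u * (u^(k+1+i) * (1-u)^(m-(k+1+i)))))
        = a (j-k-1) * ((m.choose j : ℝ))⁻¹ := by
      rw [Finset.sum_congr rfl (fun i hi => by
        rw [keyA j hj i (by simp only [Finset.mem_range] at hi; omega)])]
      rw [Finset.sum_eq_single (j-k-1)]
      · rw [if_pos (by omega), show k+1+(j-k-1) = j from by omega]
      · intro i _ hne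
        rw [if_neg (by omega), mul_zero]
      · intro hnotin
        exfalso
        apply hnotin
        rw [Finset.mem_range]
        omega
    have hS2 : (∑ i ∈ range (n+1), a i *
        (∫ u in (0:ℝ)..1, (D j).eval u * (u^(k+1+i) * (1-u)^(m-(k+1+i)))))
        = ∑ h' ∈ Finset.Icc (k+1) (m-l-1),
            (C j h' * (m.choose h' : ℝ) / ((2*m+1).factorial : ℝ))
              * (∑ i ∈ range (n+1), a i * g h' i) := by
      rw [Finset.sum_congr rfl (fun i hi => by
        rw [keyB j hj i (by simp only [Finset.mem_range] at hi; omega)])]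
      simp only [Finset.mul_sum]
      rw [Finset.sum_comm]
      apply Finset.sum_congr rfl
      intro h' _
      apply Finset.sum_congr rfl
      intro i _
      ring
    have hvanish : ∀ h' ∈ Finset.Icc (k+1) (m-l-1), h' ≠ k+1 →
        (∑ i ∈ range (n+1), a i * g h' i) = 0 := by
      intro h' hh' hne
      rw [Finset.mem_Icc] at hh'
      have hr : (h'-k-2) + (m-l-1-h') + 1 = n := by omega
      have := ortho k l n (h'-k-2) (m-l-1-h') hr
      rw [← this]
      apply Finset.sum_congr rfl
      intro i hi
      rw [Finset.mem_range] at hi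
      simp only [hg, ha]
      rw [show h'+(k+1+i) = 2*k+3+i+(h'-k-2) from by omega,
        show (m-h')+(m-(k+1+i)) = 2*n+2*l+1-i-(h'-k-2) from by omega]
      ring
    rw [← hS1, hS2]
    exact Finset.sum_eq_single_of_mem (k+1) hk1Icc
      (fun h' hh' hne => by rw [hvanish h' hh' hne, mul_zero])
  -- symmetry of the C matrix in the needed entries
  have Csym : ∀ j ∈ Finset.Icc (k+1) (m-l-1), C j (k+1) = C (k+1) j := by
    intro j hj
    have e1 : (∫ u in (0:ℝ)..1, (D j).eval u * (D (k+1)).eval u) = C (k+1) j := by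
      conv_lhs => rw [hC (k+1) hk1Icc]
      simp only [Polynomial.eval_finset_sum, Polynomial.eval_smul, smul_eq_mul, Finset.mul_sum]
      have hintC : ∀ t ∈ Finset.Icc (k+1) (m-l-1), IntervalIntegrable
          (fun u : ℝ => (D j).eval u * (C (k+1) t * (bernsteinPolynomial ℝ m t).eval u))
          MeasureTheory.volume 0 1 := fun t _ => Continuous.intervalIntegrable
        ((D j).continuous.mul (continuous_const.mul (bernsteinPolynomial ℝ m t).continuous)) _ _
      rw [intervalIntegral.integral_finset_sum hintC]
      have hterm : ∀ t ∈ Finset.Icc (k+1) (m-l-1),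
          (∫ u in (0:ℝ)..1, (D j).eval u * (C (k+1) t * (bernsteinPolynomial ℝ m t).eval u))
            = C (k+1) t * (if j = t then 1 else 0) := by
        intro t ht
        have hpt : ∀ u : ℝ, (D j).eval u * (C (k+1) t * (bernsteinPolynomial ℝ m t).eval u)
            = C (k+1) t * ((D j).eval u * (bernsteinPolynomial ℝ m t).eval u) := fun u => by ring
        simp only [hpt]
        rw [intervalIntegral.integral_const_mul, hdual j hj t ht]
      rw [Finset.sum_congr rfl hterm]
      rw [Finset.sum_eq_single_of_mem j hj
        (fun t _ hne => by rw [if_neg (fun hx => hne hx.symm), mul_zero])]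
      simp
    have e2 : (∫ u in (0:ℝ)..1, (D j).eval u * (D (k+1)).eval u) = C j (k+1) := by
      conv_lhs => rw [hC j hj]
      simp only [Polynomial.eval_finset_sum, Polynomial.eval_smul, smul_eq_mul, Finset.sum_mul]
      have hintC : ∀ t ∈ Finset.Icc (k+1) (m-l-1), IntervalIntegrable
          (fun u : ℝ => (C j t * (bernsteinPolynomial ℝ m t).eval u) * (D (k+1)).eval u)
          MeasureTheory.volume 0 1 := fun t _ => Continuous.intervalIntegrable
        ((continuous_const.mul (bernsteinPolynomial ℝ m t).continuous).mul
          (D (k+1)).continuous) _ _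
      rw [intervalIntegral.integral_finset_sum hintC]
      have hterm : ∀ t ∈ Finset.Icc (k+1) (m-l-1),
          (∫ u in (0:ℝ)..1, (C j t * (bernsteinPolynomial ℝ m t).eval u) * (D (k+1)).eval u)
            = C j t * (if (k+1 : ℕ) = t then 1 else 0) := by
        intro t ht
        have hpt : ∀ u : ℝ, (C j t * (bernsteinPolynomial ℝ m t).eval u) * (D (k+1)).eval u
            = C j t * ((D (k+1)).eval u * (bernsteinPolynomial ℝ m t).eval u) := fun u => by ring
        simp only [hpt]
        rw [intervalIntegral.integral_const_mul, hdual (k+1) hk1Icc t ht]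
      rw [Finset.sum_congr rfl hterm]
      rw [Finset.sum_eq_single_of_mem (k+1) hk1Icc
        (fun t _ hne => by rw [if_neg (fun hx => hne hx.symm), mul_zero])]
      simp
    rw [← e1, ← e2]
  -- put everything together
  have hhIcc : h ∈ Finset.Icc (k+1) (m-l-1) := by rw [Finset.mem_Icc]; omega
  have hh1Icc : h+1 ∈ Finset.Icc (k+1) (m-l-1) := by rw [Finset.mem_Icc]; omega
  have keyh := key h hhIcc
  have keyh1 := key (h+1) hh1Icc
  rw [show h-k-1 = i0 from rfl] at keyh
  rw [show h+1-k-1 = i0+1 from by omega] at keyh1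
  rw [Csym h hhIcc] at keyh
  rw [Csym (h+1) hh1Icc] at keyh1
  set γ : ℝ := ∑ i ∈ range (n+1), a i * g (k+1) i with hγ
  have hchh : ((m.choose h):ℝ) ≠ 0 :=
    Nat.cast_ne_zero.mpr (Nat.choose_pos (show h ≤ m by omega)).ne'
  have hchh1 : ((m.choose (h+1)):ℝ) ≠ 0 :=
    Nat.cast_ne_zero.mpr (Nat.choose_pos (show h+1 ≤ m by omega)).ne'
  have hchk : ((m.choose (k+1)):ℝ) ≠ 0 :=
    Nat.cast_ne_zero.mpr (Nat.choose_pos (show k+1 ≤ m by omega)).ne'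
  have hfac : (((2*m+1).factorial : ℕ):ℝ) ≠ 0 :=
    Nat.cast_ne_zero.mpr (Nat.factorial_ne_zero _)
  have ha0 : a i0 ≠ 0 := by
    rw [ha]
    apply mul_ne_zero
    apply mul_ne_zero
    apply mul_ne_zero
    · exact pow_ne_zero _ (by norm_num)
    · exact Nat.cast_ne_zero.mpr (Nat.choose_pos (by omega)).ne'
    · exact Nat.cast_ne_zero.mpr
        (Nat.pos_of_ne_zero (fun hz => by
          have := Nat.descFactorial_eq_zero_iff_lt.mp hz; omega)).ne'
    · exact Nat.cast_ne_zero.mpr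
        (Nat.pos_of_ne_zero (fun hz => by
          have := Nat.descFactorial_eq_zero_iff_lt.mp hz; omega)).ne'
  have hγ0 : γ ≠ 0 := by
    intro hz
    rw [hz, mul_zero] at keyh
    exact (mul_ne_zero ha0 (inv_ne_zero hchh)) keyh
  -- the ratio identity, specialized
  have hrat := ratio_lemma k l n i0 hi0n
  have hmm : n + k + l + 2 = m := by omega
  rw [hmm] at hrat
  rw [show k+1+i0 = h from by omega] at hrat
  -- final algebra
  have hCh : C (k+1) h = a i0 * ((m.choose h : ℝ))⁻¹ * ((2*m+1).factorial : ℝ)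
      / ((m.choose (k+1) : ℝ) * γ) := by
    rw [keyh]; field_simp
  have hCh1 : C (k+1) (h+1) = a (i0+1) * ((m.choose (h+1) : ℝ))⁻¹ * ((2*m+1).factorial : ℝ)
      / ((m.choose (k+1) : ℝ) * γ) := by
    rw [keyh1]; field_simp
  rw [hCh, hCh1]
  simp only [ha]
  exact aux_div _ _ _ _ _ _ _ _ hchh hchh1 hrat
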